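/- Let p̂ = (1/n)(Σ X_j + Y) with X_j i.i.d. Bernoulli(p) and Y independent Laplace(b). Then E[ (n/(n−1))·( p̂(1−p̂)/n + 2b²/n² ) ] = Var[p̂] for n ≥ 2; i.e., the Bessel-corrected expression (n/(n−1))(p̂(1−p̂)/n + 2(b/n)²) is an unbiased estimator of the variance of p̂. -/

import Mathlib

open MeasureTheory ProbabilityTheory
open scoped ENNReal NNReal

/-- The Bernoulli(p) distribution on ℝ: mass `p` at `1` and `1 - p` at `0`. -/
noncomputable def bernoulliReal (p : ℝ) : Measure ℝ :=
  ENNReal.ofReal p • Measure.dirac 1 + ENNReal.ofReal (1 - p) • Measure.dirac 0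

/-- The Laplace distribution with mean 0 and scale `b`. -/
noncomputable def laplaceMeasure (b : ℝ) : Measure ℝ :=
  volume.withDensity fun y => ENNReal.ofReal ((1 / (2 * b)) * Real.exp (-|y| / b))

section Helpers

open Set

lemma my_integrable_comp_abs {f : ℝ → ℝ} (hf : IntegrableOn (fun x => f |x|) (Ioi 0)) :
    Integrable (fun x => f |x|) := by
  have int_Iic : IntegrableOn (fun x ↦ f |x|) (Iic 0) := by
    rw [← Measure.map_neg_eq_self (volume : Measure ℝ)]
    have m : MeasurableEmbedding fun x : ℝ => -x := (Homeomorph.neg ℝ).measurableEmbedding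
    rw [m.integrableOn_map_iff]
    simp_rw [Function.comp_def, abs_neg, neg_preimage, neg_Iic, neg_zero]
    exact (integrableOn_Ici_iff_integrableOn_Ioi).mpr hf
  have h := int_Iic.union hf
  rwa [Iic_union_Ioi, integrableOn_univ] at h

lemma lap_intOn {b : ℝ} (hb : 0 < b) (k : ℕ) :
    IntegrableOn (fun t : ℝ => t ^ k * ((1 / (2 * b)) * Real.exp (-t / b))) (Ioi 0) := by
  have h := integrableOn_rpow_mul_exp_neg_mul_rpow (s := (k : ℝ)) (p := 1) (b := 1 / b)
    (lt_of_lt_of_le neg_one_lt_zero (Nat.cast_nonneg k)) zero_lt_one (by positivity)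
  have he : (fun x : ℝ => x ^ (k : ℝ) * Real.exp (-(1 / b) * x ^ (1 : ℝ)))
      = fun t => t ^ k * Real.exp (-t / b) := by
    funext x
    rw [Real.rpow_natCast, Real.rpow_one]
    congr 1
    field_simp
  rw [he] at h
  exact IntegrableOn.congr_fun (h.const_mul (1 / (2 * b))) (fun x _ => by ring) measurableSet_Ioi

lemma lap_intAbs {b : ℝ} (hb : 0 < b) (k : ℕ) :
    Integrable (fun y : ℝ => |y| ^ k * ((1 / (2 * b)) * Real.exp (-|y| / b))) :=
  my_integrable_comp_abs (f := fun t => t ^ k * ((1 / (2 * b)) * Real.exp (-t / b)))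
    ((lap_intOn hb k).congr_fun (fun x hx => by
      rw [abs_of_pos (mem_Ioi.mp hx)]) measurableSet_Ioi)

lemma lap_int1 {b : ℝ} (hb : 0 < b) :
    Integrable (fun y : ℝ => y * ((1 / (2 * b)) * Real.exp (-|y| / b))) := by
  refine (lap_intAbs hb 1).mono' ?_ ?_
  · exact (by fun_prop : Continuous fun y : ℝ =>
      y * ((1 / (2 * b)) * Real.exp (-|y| / b))).aestronglyMeasurable
  · filter_upwards with y
    rw [norm_mul, pow_one, Real.norm_eq_abs, Real.norm_eq_abs,
      abs_of_nonneg (show (0:ℝ) ≤ 1 / (2 * b) * Real.exp (-|y| / b) by positivity)]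

lemma lap_int2 {b : ℝ} (hb : 0 < b) :
    Integrable (fun y : ℝ => y ^ 2 * ((1 / (2 * b)) * Real.exp (-|y| / b))) := by
  have h := lap_intAbs hb 2
  simpa [sq_abs] using h

lemma lap_moment1 {b : ℝ} (hb : 0 < b) :
    ∫ y : ℝ, y * ((1 / (2 * b)) * Real.exp (-|y| / b)) = 0 := by
  set g : ℝ → ℝ := fun y => y * ((1 / (2 * b)) * Real.exp (-|y| / b)) with hg
  have m : MeasurableEmbedding fun x : ℝ => -x := (Homeomorph.neg ℝ).measurableEmbedding
  have h1 : ∫ y, g y = ∫ y, g (-y) := by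
    conv_lhs => rw [← Measure.map_neg_eq_self (volume : Measure ℝ)]
    exact m.integral_map g
  have h2 : ∀ y, g (-y) = - g y := by
    intro y; simp only [hg, abs_neg]; ring
  simp_rw [h2, integral_neg] at h1
  linarith

lemma lap_moment2 {b : ℝ} (hb : 0 < b) :
    ∫ y : ℝ, y ^ 2 * ((1 / (2 * b)) * Real.exp (-|y| / b)) = 2 * b ^ 2 := by
  have he : (fun y : ℝ => y ^ 2 * ((1 / (2 * b)) * Real.exp (-|y| / b)))
      = fun y => (fun t => t ^ 2 * ((1 / (2 * b)) * Real.exp (-t / b))) |y| := by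
    funext y; simp [sq_abs]
  rw [he, integral_comp_abs (f := fun t => t ^ 2 * ((1 / (2 * b)) * Real.exp (-t / b)))]
  have key := Real.integral_rpow_mul_exp_neg_mul_Ioi (a := 3) (r := 1 / b) (by norm_num) (by positivity)
  have he2 : ∀ t ∈ Ioi (0:ℝ), t ^ ((3:ℝ) - 1) * Real.exp (-(1 / b * t))
      = t ^ 2 * ((1 / (2 * b)) * Real.exp (-t / b)) * (2 * b) := by
    intro t _
    rw [(by norm_num : (3:ℝ) - 1 = ((2:ℕ):ℝ)), Real.rpow_natCast]
    rw [(by field_simp : -(1 / b * t) = -t / b)]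
    field_simp
  rw [setIntegral_congr_fun measurableSet_Ioi he2] at key
  rw [integral_mul_const] at key
  have hg3 : Real.Gamma 3 = 2 := by
    rw [(by norm_num : (3:ℝ) = ((2:ℕ):ℝ) + 1), Real.Gamma_nat_eq_factorial]
    norm_num
  rw [hg3, one_div_one_div, (by norm_num : (3:ℝ) = ((3:ℕ):ℝ)), Real.rpow_natCast] at key
  have hbne : (2 : ℝ) * b ≠ 0 := by positivity
  field_simp at key ⊢
  nlinarith [key]

lemma bern_integral {p : ℝ} (hp0 : 0 ≤ p) (hp1 : p ≤ 1) (f : ℝ → ℝ) :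
    ∫ x, f x ∂(bernoulliReal p) = p * f 1 + (1 - p) * f 0 := by
  have hd : ∀ a : ℝ, Integrable f (Measure.dirac a) :=
    fun a => (integrable_congr (ae_eq_dirac f)).mpr (integrable_const _)
  have i1 : Integrable f (ENNReal.ofReal p • Measure.dirac (1:ℝ)) :=
    (hd 1).smul_measure ENNReal.ofReal_ne_top
  have i0 : Integrable f (ENNReal.ofReal (1 - p) • Measure.dirac (0:ℝ)) :=
    (hd 0).smul_measure ENNReal.ofReal_ne_top
  rw [bernoulliReal, integral_add_measure i1 i0, integral_smul_measure, integral_smul_measure,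
    integral_dirac, integral_dirac, ENNReal.toReal_ofReal hp0,
    ENNReal.toReal_ofReal (by linarith : (0:ℝ) ≤ 1 - p), smul_eq_mul, smul_eq_mul]

lemma bern_compl {p : ℝ} : bernoulliReal p ({0, 1}ᶜ : Set ℝ) = 0 := by
  have hs : MeasurableSet ({0, 1} : Set ℝ) := (measurableSet_singleton 1).insert 0
  simp [bernoulliReal, Measure.dirac_apply' _ hs.compl]

end Helpers

/-- With `p̂ = (1/n)(∑ X_j + Y)` for `X_j` i.i.d. Bernoulli(p) and `Y` an
independent Laplace(0, b), the Bessel-corrected expression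
`(n/(n-1))(p̂(1-p̂)/n + 2(b/n)²)` is an unbiased estimator of `Var[p̂]`. -/
theorem bessel_corrected_unbiased {Ω : Type*} [MeasurableSpace Ω]
    (μ : Measure Ω) [IsProbabilityMeasure μ] (n : ℕ) (hn : 2 ≤ n)
    (p b : ℝ) (hp0 : 0 ≤ p) (hp1 : p ≤ 1) (hb : 0 < b)
    (X : Fin n → Ω → ℝ) (Y : Ω → ℝ)
    (hXmeas : ∀ j, Measurable (X j)) (hYmeas : Measurable Y)
    (hXdist : ∀ j, μ.map (X j) = bernoulliReal p)
    (hYdist : μ.map Y = laplaceMeasure b)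
    (hindep : iIndepFun
      (fun i : Option (Fin n) => Option.elim i Y X) μ)
    (phat : Ω → ℝ) (hphat : phat = fun ω => (1 / (n : ℝ)) * (∑ j, X j ω + Y ω)) :
    μ[fun ω => ((n : ℝ) / (n - 1)) *
        (phat ω * (1 - phat ω) / n + 2 * (b / n) ^ 2)]
      = variance phat μ := by
  -- basic numerics
  have hn0 : (n : ℝ) ≠ 0 := by
    have : (0:ℝ) < n := by exact_mod_cast lt_of_lt_of_le (by norm_num) hn
    linarith
  have hn1 : (n : ℝ) - 1 ≠ 0 := by
    have : (2:ℝ) ≤ n := by exact_mod_cast hn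
    intro h; linarith
  -- a.e. values of X j
  have hs01 : MeasurableSet ({0, 1} : Set ℝ) := (measurableSet_singleton 1).insert 0
  have hXae : ∀ j, ∀ᵐ ω ∂μ, X j ω ∈ ({0, 1} : Set ℝ) := by
    intro j
    rw [ae_iff]
    have : {ω | ¬ X j ω ∈ ({0,1} : Set ℝ)} = X j ⁻¹' ({0,1}ᶜ : Set ℝ) := rfl
    rw [this, ← Measure.map_apply (hXmeas j) hs01.compl, hXdist j, bern_compl]
  have hXbd : ∀ j, ∀ᵐ ω ∂μ, ‖X j ω‖ ≤ 1 := by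
    intro j
    filter_upwards [hXae j] with ω hω
    rcases hω with h | h <;> simp_all
  -- moments of X
  have hEX : ∀ j, ∫ ω, X j ω ∂μ = p := by
    intro j
    have h : ∫ ω, X j ω ∂μ = ∫ x, x ∂(μ.map (X j)) :=
      (integral_map (hXmeas j).aemeasurable aestronglyMeasurable_id).symm
    rw [h, hXdist j]
    simpa using bern_integral hp0 hp1 id
  have hEX2 : ∀ j, ∫ ω, X j ω ^ 2 ∂μ = p := by
    intro j
    have h : ∫ ω, X j ω ^ 2 ∂μ = ∫ x, x ^ 2 ∂(μ.map (X j)) :=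
      (integral_map (φ := X j) (hXmeas j).aemeasurable
        (f := fun x : ℝ => x ^ 2) (by fun_prop)).symm
    rw [h, hXdist j, bern_integral hp0 hp1 (fun x => x ^ 2)]
    norm_num
  -- integrability & moments of Y
  have hdmeas : Measurable fun y : ℝ => ENNReal.ofReal ((1 / (2 * b)) * Real.exp (-|y| / b)) :=
    (by fun_prop : Measurable fun y : ℝ => (1 / (2 * b)) * Real.exp (-|y| / b)).ennreal_ofReal
  have hdfin : ∀ᵐ y : ℝ, ENNReal.ofReal ((1 / (2 * b)) * Real.exp (-|y| / b)) < ⊤ := by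
    filter_upwards with y using ENNReal.ofReal_lt_top
  have hlapint : ∀ f : ℝ → ℝ, Integrable (fun y => f y * ((1 / (2 * b)) * Real.exp (-|y| / b)))
      → Integrable f (laplaceMeasure b) := by
    intro f hf
    rw [laplaceMeasure, integrable_withDensity_iff hdmeas hdfin]
    refine hf.congr (Filter.Eventually.of_forall fun y => ?_)
    simp only
    rw [ENNReal.toReal_ofReal (by positivity)]
  have hIntY : Integrable Y μ := by
    have h := hlapint id (by simpa using lap_int1 hb)
    rw [← hYdist] at h
    exact (integrable_map_measure aestronglyMeasurable_id hYmeas.aemeasurable).mp h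
  have hIntY2 : Integrable (fun ω => Y ω ^ 2) μ := by
    have h := hlapint (fun y => y ^ 2) (lap_int2 hb)
    rw [← hYdist] at h
    exact (integrable_map_measure (by fun_prop) hYmeas.aemeasurable).mp h
  have hlapval : ∀ f : ℝ → ℝ, ∫ y, f y ∂(laplaceMeasure b)
      = ∫ y, f y * ((1 / (2 * b)) * Real.exp (-|y| / b)) := by
    intro f
    rw [laplaceMeasure]
    have hnn : Measurable fun y : ℝ =>
        ((1 / (2 * b)) * Real.exp (-|y| / b)).toNNReal :=
      (by fun_prop : Measurable fun y : ℝ => (1 / (2 * b)) * Real.exp (-|y| / b)).real_toNNReal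
    rw [show (fun y : ℝ => ENNReal.ofReal ((1 / (2 * b)) * Real.exp (-|y| / b)))
        = fun y : ℝ => (((1 / (2 * b)) * Real.exp (-|y| / b)).toNNReal : ℝ≥0∞) from rfl]
    rw [integral_withDensity_eq_integral_smul hnn f]
    congr 1
    funext y
    rw [NNReal.smul_def, smul_eq_mul, Real.coe_toNNReal _ (by positivity), mul_comm]
  have hEY : ∫ ω, Y ω ∂μ = 0 := by
    have h : ∫ ω, Y ω ∂μ = ∫ x, x ∂(μ.map Y) :=
      (integral_map hYmeas.aemeasurable aestronglyMeasurable_id).symm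
    rw [h, hYdist]
    simpa using (hlapval id).trans (by simpa using lap_moment1 hb)
  have hEY2 : ∫ ω, Y ω ^ 2 ∂μ = 2 * b ^ 2 := by
    have h : ∫ ω, Y ω ^ 2 ∂μ = ∫ x, x ^ 2 ∂(μ.map Y) :=
      (integral_map (φ := Y) hYmeas.aemeasurable
        (f := fun x : ℝ => x ^ 2) (by fun_prop)).symm
    rw [h, hYdist]
    exact (hlapval (fun y => y ^ 2)).trans (lap_moment2 hb)
  -- integrability of products
  have hIntX : ∀ j, Integrable (X j) μ :=
    fun j => (integrable_const (1:ℝ)).mono' (hXmeas j).aestronglyMeasurable (hXbd j)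
  have hIntXX : ∀ i j, Integrable (fun ω => X i ω * X j ω) μ := by
    intro i j
    refine (integrable_const (1:ℝ)).mono'
      ((hXmeas i).mul (hXmeas j)).aestronglyMeasurable ?_
    filter_upwards [hXbd i, hXbd j] with ω h1 h2
    rw [norm_mul]
    calc ‖X i ω‖ * ‖X j ω‖ ≤ 1 * 1 :=
          mul_le_mul h1 h2 (norm_nonneg _) zero_le_one
    _ = 1 := by norm_num
  have hIntXY : ∀ j, Integrable (fun ω => X j ω * Y ω) μ := by
    intro j
    refine hIntY.abs.mono' ((hXmeas j).mul hYmeas).aestronglyMeasurable ?_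
    filter_upwards [hXbd j] with ω h1
    rw [norm_mul]
    calc ‖X j ω‖ * ‖Y ω‖ ≤ 1 * ‖Y ω‖ := by gcongr
    _ = |Y ω| := by rw [one_mul, Real.norm_eq_abs]
  -- independence consequences
  have hEXX : ∀ i j, i ≠ j → ∫ ω, X i ω * X j ω ∂μ = p * p := by
    intro i j hij
    have hind : IndepFun (X i) (X j) μ :=
      hindep.indepFun (show (some i : Option (Fin n)) ≠ some j by simpa using hij)
    have := hind.integral_mul_eq_mul_integral (hXmeas i).aestronglyMeasurable (hXmeas j).aestronglyMeasurable
    rw [show ∫ ω, X i ω * X j ω ∂μ = integral μ (X i * X j) from rfl, this, hEX i, hEX j]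
  have hEXY : ∀ j, ∫ ω, X j ω * Y ω ∂μ = 0 := by
    intro j
    have hind : IndepFun (X j) Y μ :=
      hindep.indepFun (show (some j : Option (Fin n)) ≠ none by simp)
    have := hind.integral_mul_eq_mul_integral (hXmeas j).aestronglyMeasurable hYmeas.aestronglyMeasurable
    rw [show ∫ ω, X j ω * Y ω ∂μ = integral μ (X j * Y) from rfl, this, hEY, mul_zero]
  -- MemLp 2
  have hmemX : ∀ j, MemLp (X j) 2 μ :=
    fun j => MemLp.of_bound (hXmeas j).aestronglyMeasurable 1 (hXbd j)
  have hmemY : MemLp Y 2 μ :=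
    (memLp_two_iff_integrable_sq hYmeas.aestronglyMeasurable).mpr hIntY2
  have hmemS : MemLp (fun ω => ∑ j, X j ω) 2 μ := by
    have h := memLp_finsetSum' Finset.univ fun j (_ : j ∈ Finset.univ) => hmemX j
    have he : (fun ω => ∑ j, X j ω) = ∑ i ∈ Finset.univ, X i := by
      funext ω; simp
    rwa [he]
  have hmemphat : MemLp phat 2 μ := by
    rw [hphat]
    exact (hmemS.add hmemY).const_mul _
  -- first moment of phat
  have hIntS : Integrable (fun ω => ∑ j, X j ω) μ :=
    integrable_finset_sum _ fun j _ => hIntX j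
  have E1 : ∫ ω, phat ω ∂μ = p := by
    rw [hphat]
    simp only
    rw [integral_const_mul, integral_add hIntS hIntY, integral_finset_sum _ fun j _ => hIntX j]
    simp only [hEX, hEY, Finset.sum_const, Finset.card_univ, Fintype.card_fin, nsmul_eq_mul,
      add_zero]
    field_simp
  -- second moment of phat
  have hexp : (fun ω => phat ω ^ 2) = fun ω => (1 / (n:ℝ)) ^ 2 *
      ((∑ i, ∑ j, X i ω * X j ω) + 2 * (∑ j, X j ω * Y ω) + Y ω ^ 2) := by
    funext ω
    rw [hphat]
    simp only
    rw [← Finset.sum_mul_sum, ← Finset.sum_mul]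
    ring
  have hIntSS : Integrable (fun ω => ∑ i, ∑ j, X i ω * X j ω) μ :=
    integrable_finset_sum _ fun i _ => integrable_finset_sum _ fun j _ => hIntXX i j
  have hIntSY : Integrable (fun ω => ∑ j, X j ω * Y ω) μ :=
    integrable_finset_sum _ fun j _ => hIntXY j
  have hXXval : ∀ i j : Fin n, (∫ ω, X i ω * X j ω ∂μ) = if i = j then p else p ^ 2 := by
    intro i j
    by_cases h : i = j
    · subst h
      simp only [if_pos rfl]
      rw [← hEX2 i]
      congr 1
      funext ω
      ring
    · rw [if_neg h, hEXX i j h, sq]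
  have E2 : ∫ ω, phat ω ^ 2 ∂μ
      = (1 / (n:ℝ)) ^ 2 * ((n:ℝ) * p + ((n:ℝ)^2 - n) * p ^ 2 + 2 * b ^ 2) := by
    have hB : Integrable (fun ω => 2 * (∑ j, X j ω * Y ω)) μ := hIntSY.const_mul 2
    have hA : Integrable
        (fun ω => (∑ i, ∑ j, X i ω * X j ω) + 2 * (∑ j, X j ω * Y ω)) μ := hIntSS.add hB
    rw [hexp, integral_const_mul,
      integral_add hA hIntY2,
      integral_add hIntSS hB, integral_const_mul,
      integral_finset_sum _ (fun i _ => integrable_finset_sum _ fun j _ => hIntXX i j)]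
    have hsum : ∑ i : Fin n, ∫ ω, (∑ j, X i ω * X j ω) ∂μ
        = (n:ℝ) * p + ((n:ℝ)^2 - n) * p ^ 2 := by
      have : ∀ i : Fin n, ∫ ω, (∑ j, X i ω * X j ω) ∂μ = p + ((n:ℝ) - 1) * p ^ 2 := by
        intro i
        rw [integral_finset_sum _ fun j _ => hIntXX i j]
        have : ∀ j : Fin n, (∫ ω, X i ω * X j ω ∂μ)
            = p ^ 2 + if i = j then p - p ^ 2 else 0 := by
          intro j
          rw [hXXval i j]
          by_cases h : i = j <;> simp [h]
        simp only [this, Finset.sum_add_distrib, Finset.sum_const, Finset.card_univ,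
          Fintype.card_fin, nsmul_eq_mul, Finset.sum_ite_eq, Finset.mem_univ, if_pos]
        ring
      simp only [this, Finset.sum_const, Finset.card_univ, Fintype.card_fin, nsmul_eq_mul]
      ring
    rw [integral_finset_sum _ fun j _ => hIntXY j] at *
    simp only [hEXY, Finset.sum_const_zero, mul_zero, add_zero] at *
    rw [hsum, hEY2]
  -- variance
  have hvar : variance phat μ
      = (1 / (n:ℝ)) ^ 2 * ((n:ℝ) * p + ((n:ℝ)^2 - n) * p ^ 2 + 2 * b ^ 2) - p ^ 2 := by
    rw [variance_eq_sub hmemphat]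
    have h2 : μ[phat ^ 2] = ∫ ω, phat ω ^ 2 ∂μ := by
      congr 1
    rw [h2, E2, E1]
  -- LHS
  have hIntphat : Integrable phat μ := hmemphat.integrable one_le_two
  have hIntphat2 : Integrable (fun ω => phat ω ^ 2) μ := by
    have := hmemphat.integrable_sq
    simpa [sq] using this
  have hLHS : (fun ω => ((n : ℝ) / (n - 1)) * (phat ω * (1 - phat ω) / n + 2 * (b / n) ^ 2))
      = fun ω => (((n : ℝ) / (n - 1)) / n) * phat ω - (((n : ℝ) / (n - 1)) / n) * phat ω ^ 2
        + ((n : ℝ) / (n - 1)) * (2 * (b / n) ^ 2) := by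
    funext ω
    ring
  have hsub : Integrable
      (fun ω => (((n : ℝ) / (n - 1)) / n) * phat ω - (((n : ℝ) / (n - 1)) / n) * phat ω ^ 2) μ :=
    (hIntphat.const_mul _).sub (hIntphat2.const_mul _)
  have hcm1 : Integrable (fun ω => (((n : ℝ) / (n - 1)) / n) * phat ω) μ :=
    hIntphat.const_mul _
  have hcm2 : Integrable (fun ω => (((n : ℝ) / (n - 1)) / n) * phat ω ^ 2) μ :=
    hIntphat2.const_mul _
  rw [hLHS, integral_add hsub (integrable_const _),
    integral_sub hcm1 hcm2, integral_const_mul,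
    integral_const_mul, integral_const, probReal_univ, one_smul,
    E1, E2, hvar]
  field_simp
  ring
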